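/- There is no faithful model of the group of unit quaternions on qubit states: there is no injective function v from the unit quaternions to ℂ² and linear map m : ℂ²⊗ℂ² → ℂ² with m(v(a)⊗v(b)) = v(a·b) for all unit quaternions a, b, and v(1) acting as a unit for m on the span of the image of v. -/

import Mathlib

open TensorProduct

lemma unit_quat_norm_one (a : Quaternion ℝ) (h : Quaternion.normSq a = 1) :
    a ∈ Metric.sphere (0 : Quaternion ℝ) 1 := by
  rw [mem_sphere_zero_iff_norm]
  have h2 : ‖a‖ * ‖a‖ = 1 := by rw [← Quaternion.normSq_eq_norm_mul_self, h]
  rcases mul_self_eq_one_iff.mp h2 with h3 | h3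
  · exact h3
  · nlinarith [norm_nonneg a]

/-- There is no faithful model of the group of unit quaternions on qubit states: there is no
injective `v` from the unit quaternions to `ℂ²` together with a linear map
`m : ℂ² ⊗ ℂ² → ℂ²` satisfying `m (v a ⊗ v b) = v (a * b)` and with `v 1` acting as a unit
for `m` on the span of the image of `v`. -/
theorem no_faithful_qubit_model_of_unit_quaternions :
    ¬ ∃ (v : Metric.sphere (0 : Quaternion ℝ) 1 → (Fin 2 → ℂ))
        (m : (Fin 2 → ℂ) ⊗[ℂ] (Fin 2 → ℂ) →ₗ[ℂ] (Fin 2 → ℂ)),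
      Function.Injective v ∧
      (∀ a b : Metric.sphere (0 : Quaternion ℝ) 1, m (v a ⊗ₜ[ℂ] v b) = v (a * b)) ∧
      (∀ x ∈ Submodule.span ℂ (Set.range v),
        m (v 1 ⊗ₜ[ℂ] x) = x ∧ m (x ⊗ₜ[ℂ] v 1) = x) := by
  rintro ⟨v, m, hinj, hmul, hunit⟩
  have hmem : ∀ a : Metric.sphere (0 : Quaternion ℝ) 1,
      v a ∈ Submodule.span ℂ (Set.range v) := fun a => Submodule.subset_span ⟨a, rfl⟩
  have hu1 : ∀ a, m (v 1 ⊗ₜ[ℂ] v a) = v a := fun a => (hunit _ (hmem a)).1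
  have hu2 : ∀ a, m (v a ⊗ₜ[ℂ] v 1) = v a := fun a => (hunit _ (hmem a)).2
  -- symmetry of m on the image of v
  have hsymm : ∀ a b, m (v a ⊗ₜ[ℂ] v b) = m (v b ⊗ₜ[ℂ] v a) := by
    by_cases hc : ∀ a, ∃ c : ℂ, v a = c • v 1
    · intro a b
      obtain ⟨ca, ha⟩ := hc a; obtain ⟨cb, hb⟩ := hc b
      rw [ha, hb]
      simp only [← TensorProduct.smul_tmul', TensorProduct.tmul_smul, map_smul]
      rw [smul_comm]
    · push_neg at hc
      obtain ⟨a0, ha0⟩ := hc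
      have hv1 : v 1 ≠ 0 := by
        intro h0
        apply ha0 0
        rw [zero_smul]
        have := hu2 a0
        rw [h0, TensorProduct.tmul_zero, map_zero] at this
        exact this.symm
      have hli : LinearIndependent ℂ ![v 1, v a0] := by
        rw [LinearIndependent.pair_iff]
        intro s t hst
        by_cases ht : t = 0
        · subst ht
          rw [zero_smul, add_zero, smul_eq_zero] at hst
          exact ⟨hst.resolve_right hv1, rfl⟩
        · exfalso
          apply ha0 (-(t⁻¹ * s))
          have h2 : t • v a0 = -(s • v 1) := eq_neg_of_add_eq_zero_right hst
          calc v a0 = t⁻¹ • (t • v a0) := by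
                rw [smul_smul, inv_mul_cancel₀ ht, one_smul]
            _ = (-(t⁻¹ * s)) • v 1 := by
                rw [h2, smul_neg, smul_smul, neg_smul]
      have hspan : Submodule.span ℂ {v 1, v a0} = ⊤ := by
        apply Submodule.eq_top_of_finrank_eq
        have hr := finrank_span_eq_card hli
        have hrange : Set.range ![v 1, v a0] = {v 1, v a0} := by
          simp [Matrix.range_cons, Matrix.range_empty, Set.pair_comm]
        rw [hrange] at hr
        simp [hr]
      have hrep : ∀ b, ∃ p q : ℂ, p • v 1 + q • v a0 = v b := fun b =>
        Submodule.mem_span_pair.mp (hspan ▸ Submodule.mem_top)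
      intro a b
      obtain ⟨p, q, ha⟩ := hrep a
      obtain ⟨r, s, hb⟩ := hrep b
      rw [← ha, ← hb]
      simp only [TensorProduct.add_tmul, TensorProduct.tmul_add,
        ← TensorProduct.smul_tmul', TensorProduct.tmul_smul, map_add, map_smul,
        hu1, hu2]
      module
  have hcomm : ∀ a b : Metric.sphere (0 : Quaternion ℝ) 1, a * b = b * a := by
    intro a b
    apply hinj
    rw [← hmul, ← hmul, hsymm]
  -- concrete noncommuting unit quaternions
  have hi : (⟨0,1,0,0⟩ : Quaternion ℝ) ∈ Metric.sphere (0 : Quaternion ℝ) 1 :=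
    unit_quat_norm_one _ ((Quaternion.normSq_def' _).trans (by norm_num))
  have hj : (⟨0,0,1,0⟩ : Quaternion ℝ) ∈ Metric.sphere (0 : Quaternion ℝ) 1 :=
    unit_quat_norm_one _ ((Quaternion.normSq_def' _).trans (by norm_num))
  have h := hcomm ⟨_, hi⟩ ⟨_, hj⟩
  have h2 : (⟨0,1,0,0⟩ * ⟨0,0,1,0⟩ : Quaternion ℝ) = ⟨0,0,1,0⟩ * ⟨0,1,0,0⟩ :=
    Subtype.ext_iff.mp h
  have h3 := congrArg (fun q : Quaternion ℝ => q.imK) h2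
  have e1 := Quaternion.imK_mul (⟨0,1,0,0⟩ : Quaternion ℝ) ⟨0,0,1,0⟩
  have e2 := Quaternion.imK_mul (⟨0,0,1,0⟩ : Quaternion ℝ) ⟨0,1,0,0⟩
  replace h3 := e1.symm.trans (h3.trans e2)
  norm_num at h3
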